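/- With L an invertible N×N matrix, S invertible, β_LB^S = min over nonzero w of (wᵀLᵀS⁻ᵀS⁻¹Lw)/(wᵀw), and α_UB = max over nonzero w of (wᵀS⁻ᵀS⁻¹w)/(wᵀw): if Lu = f, then for any v ∈ ℝᴺ, ‖S⁻¹(u − v)‖ ≤ sqrt(α_UB) · ‖S⁻¹(f − Lv)‖ / sqrt(β_LB^S). -/

import Mathlib

open Matrix BigOperators

noncomputable def euclNorm {N : ℕ} (v : Fin N → ℝ) : ℝ := Real.sqrt (∑ i, (v i) ^ 2)

lemma enorm_eq_sqrt_dot {N : ℕ} (v : Fin N → ℝ) :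
    euclNorm v = Real.sqrt (dotProduct v v) := by
  unfold euclNorm dotProduct
  congr 1
  exact Finset.sum_congr rfl fun i _ => sq (v i)

lemma dp_self_nonneg {N : ℕ} (v : Fin N → ℝ) : 0 ≤ dotProduct v v :=
  Finset.sum_nonneg fun i _ => mul_self_nonneg _

lemma dp_self_pos {N : ℕ} {v : Fin N → ℝ} (hv : v ≠ 0) : 0 < dotProduct v v := by
  rcases lt_or_eq_of_le (dp_self_nonneg v) with h | h
  · exact h
  · exact absurd (dotProduct_self_eq_zero.1 h.symm) hv

lemma dot_transpose_mul {N : ℕ} (A : Matrix (Fin N) (Fin N) ℝ) (x : Fin N → ℝ) :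
    dotProduct x ((Aᵀ * A).mulVec x) = dotProduct (A.mulVec x) (A.mulVec x) := by
  rw [← mulVec_mulVec, dotProduct_mulVec, vecMul_transpose]

theorem stmt3 {N : ℕ} (L S : Matrix (Fin N) (Fin N) ℝ)
    (hL : IsUnit L) (hS : IsUnit S)
    (βS α : ℝ)
    (hβS : IsLeast {r : ℝ | ∃ w : Fin N → ℝ, w ≠ 0 ∧
      r = dotProduct w ((Lᵀ * S⁻¹ᵀ * S⁻¹ * L).mulVec w) / dotProduct w w} βS)
    (hα : IsGreatest {r : ℝ | ∃ w : Fin N → ℝ, w ≠ 0 ∧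
      r = dotProduct w ((S⁻¹ᵀ * S⁻¹).mulVec w) / dotProduct w w} α)
    (u f : Fin N → ℝ) (hu : L.mulVec u = f) :
    ∀ v : Fin N → ℝ,
      euclNorm (S⁻¹.mulVec (u - v)) ≤
        Real.sqrt α * euclNorm (S⁻¹.mulVec (f - L.mulVec v)) / Real.sqrt βS := by
  intro v
  have hSinv : IsUnit S⁻¹ := (Matrix.isUnit_nonsing_inv_iff).2 hS
  have hM : IsUnit (S⁻¹ * L) := hSinv.mul hL
  have hkey : Lᵀ * S⁻¹ᵀ * S⁻¹ * L = (S⁻¹ * L)ᵀ * (S⁻¹ * L) := by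
    rw [transpose_mul, Matrix.mul_assoc]
  set e : Fin N → ℝ := u - v with he
  have hres : f - L.mulVec v = L.mulVec e := by
    rw [← hu, he, mulVec_sub]
  rw [hres]
  have hcomp : S⁻¹.mulVec (L.mulVec e) = (S⁻¹ * L).mulVec e := by
    rw [mulVec_mulVec]
  rw [hcomp, enorm_eq_sqrt_dot, enorm_eq_sqrt_dot]
  set a := dotProduct (S⁻¹.mulVec e) (S⁻¹.mulVec e) with ha
  set b := dotProduct ((S⁻¹ * L).mulVec e) ((S⁻¹ * L).mulVec e) with hb
  have ha0 : 0 ≤ a := dp_self_nonneg _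
  have hb0 : 0 ≤ b := dp_self_nonneg _
  obtain ⟨w, hw, hwe⟩ := hβS.1
  have hβpos : 0 < βS := by
    rw [hwe, hkey, dot_transpose_mul]
    have hwne : (S⁻¹ * L).mulVec w ≠ 0 := by
      intro h
      apply hw
      exact (Matrix.mulVec_injective_iff_isUnit.2 hM) (by simpa [mulVec_zero] using h)
    have h1 := dp_self_pos hwne
    have h2 := dp_self_pos hw
    positivity
  by_cases hez : e = 0
  · have ha' : a = 0 := by rw [ha, hez]; simp
    rw [ha', Real.sqrt_zero]
    positivity
  · have hc : 0 < dotProduct e e := dp_self_pos hez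
    have hβle : βS ≤ b / dotProduct e e := by
      have := hβS.2 ⟨e, hez, rfl⟩
      rwa [hkey, dot_transpose_mul, ← hb] at this
    have hαge : a / dotProduct e e ≤ α := by
      have := hα.2 ⟨e, hez, rfl⟩
      rwa [dot_transpose_mul, ← ha] at this
    have hα0 : 0 ≤ α := le_trans (by positivity) hαge
    have key : a ≤ α * b / βS := by
      have h1 : a ≤ α * dotProduct e e := by
        rw [div_le_iff₀ hc] at hαge; linarith
      have h2 : dotProduct e e ≤ b / βS := by
        rw [le_div_iff₀ hc] at hβle
        rw [le_div_iff₀ hβpos]; nlinarith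
      calc a ≤ α * dotProduct e e := h1
        _ ≤ α * (b / βS) := mul_le_mul_of_nonneg_left h2 hα0
        _ = α * b / βS := by ring
    calc Real.sqrt a ≤ Real.sqrt (α * b / βS) := Real.sqrt_le_sqrt key
      _ = Real.sqrt α * Real.sqrt b / Real.sqrt βS := by
          rw [Real.sqrt_div (by positivity), Real.sqrt_mul hα0]
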